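/- Define Î(s) = ∫₀¹ dξ/√((1-ξ³)/3 - s(1-ξ⁴)/4) and η(s) = 2sÎ'(s) - Î(s) on (0,1). Then η'(s) > 0 for all s ∈ (0,1); consequently η vanishes at most at one point of (0,1). -/

import Mathlib

set_option maxHeartbeats 1000000

open intervalIntegral

noncomputable def Ihat : ℝ → ℝ :=
  fun s => ∫ ξ in (0:ℝ)..1, 1 / Real.sqrt ((1 - ξ^3)/3 - s * (1 - ξ^4)/4)

noncomputable def eta : ℝ → ℝ := fun s => 2 * s * deriv Ihat s - Ihat s

open MeasureTheory Set


noncomputable def gg (s ξ : ℝ) : ℝ := (1 - ξ^3)/3 - s * (1 - ξ^4)/4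
noncomputable def BB (ξ : ℝ) : ℝ := (1 - ξ^4)/4

lemma g_lower {s ξ : ℝ} (hs0 : 0 ≤ s) (hs1 : s ≤ 1) (hξ0 : 0 ≤ ξ) (hξ1 : ξ ≤ 1) :
    (1-s)*(1-ξ)/4 ≤ gg s ξ := by
  unfold gg
  nlinarith [mul_nonneg (mul_nonneg (sub_nonneg.2 hs1) (sub_nonneg.2 hξ1))
      (by nlinarith : (0:ℝ) ≤ 1 + 4*ξ + 4*ξ^2),
    mul_nonneg (mul_nonneg hs0 (sub_nonneg.2 hξ1))
      (by nlinarith [pow_le_pow_left₀ hξ0 hξ1 3, pow_le_one₀ hξ0 hξ1 (n := 3)] :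
        (0:ℝ) ≤ 1 + ξ + ξ^2 - 3*ξ^3)]

lemma B_nonneg {ξ : ℝ} (hξ1 : ξ ≤ 1) (hξ0 : 0 ≤ ξ) : 0 ≤ BB ξ := by
  unfold BB; nlinarith [pow_le_one₀ hξ0 hξ1 (n := 4)]

lemma B_le {ξ : ℝ} (hξ0 : 0 ≤ ξ) (hξ1 : ξ ≤ 1) : BB ξ ≤ 1 - ξ := by
  unfold BB
  nlinarith [mul_nonneg (sub_nonneg.2 hξ1)
    (show (0:ℝ) ≤ 3 - ξ - ξ^2 - ξ^3 by
      nlinarith [pow_le_one₀ hξ0 hξ1 (n := 2), pow_le_one₀ hξ0 hξ1 (n := 3)])]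

lemma B_pos {ξ : ℝ} (hξ0 : 0 ≤ ξ) (hξ1 : ξ < 1) : 0 < BB ξ := by
  unfold BB; nlinarith [pow_lt_one₀ hξ0 hξ1 (by norm_num : 4 ≠ 0)]

lemma point_bound {cst p q m x ξ : ℝ} (hcst : 0 ≤ cst) (hp : 0 ≤ p) (hq : q ≤ 0)
    (hm : 0 < m) (hξ : ξ ∈ Set.Ioo (0:ℝ) 1) (hξ0 : 0 ≤ ξ)
    (hmg : m * (1-ξ) ≤ gg x ξ) :
    cst * BB ξ ^ p * gg x ξ ^ q ≤ (cst * m ^ q) * (1-ξ) ^ (p + q) := by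
  have h1ξ : (0:ℝ) < 1 - ξ := by linarith [hξ.2]
  have hB0 : 0 ≤ BB ξ := B_nonneg hξ.2.le hξ.1.le
  have hg0 : 0 < gg x ξ := lt_of_lt_of_le (mul_pos hm h1ξ) hmg
  have h1 : BB ξ ^ p ≤ (1-ξ) ^ p := Real.rpow_le_rpow hB0 (B_le hξ.1.le hξ.2.le) hp
  have h2 : gg x ξ ^ q ≤ (m * (1-ξ)) ^ q :=
    Real.rpow_le_rpow_of_nonpos (mul_pos hm h1ξ) hmg hq
  calc cst * BB ξ ^ p * gg x ξ ^ q
      ≤ cst * (1-ξ) ^ p * ((m * (1-ξ)) ^ q) := by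
        apply mul_le_mul (by exact mul_le_mul_of_nonneg_left h1 hcst) h2
          (Real.rpow_nonneg hg0.le q)
        exact mul_nonneg hcst (Real.rpow_nonneg h1ξ.le p)
    _ = (cst * m ^ q) * (1-ξ) ^ (p + q) := by
        rw [Real.mul_rpow hm.le h1ξ.le, Real.rpow_add h1ξ]; ring

lemma integrable_bound (K : ℝ) :
    IntervalIntegrable (fun ξ : ℝ => K * (1-ξ) ^ (-(1/2) : ℝ)) volume 0 1 := by
  have h : IntervalIntegrable (fun x : ℝ => x ^ (-(1/2) : ℝ)) volume 0 1 :=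
    intervalIntegral.intervalIntegrable_rpow' (by norm_num)
  have h2 := (h.comp_sub_left 1).symm
  simpa using h2.const_mul K

lemma core (cst : ℝ) (hcst : 0 < cst) (k : ℕ) (r : ℝ) (hr : r < 0) (hkr : (k:ℝ) + r = -(1/2))
    {s₀ : ℝ} (hs0 : 0 < s₀) (hs1 : s₀ < 1) :
    IntervalIntegrable (fun ξ => cst * -r * BB ξ ^ ((k:ℝ)+1) * gg s₀ ξ ^ (r-1)) volume 0 1 ∧
    HasDerivAt (fun s => ∫ ξ in (0:ℝ)..1, cst * BB ξ ^ (k:ℝ) * gg s ξ ^ r)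
      (∫ ξ in (0:ℝ)..1, cst * -r * BB ξ ^ ((k:ℝ)+1) * gg s₀ ξ ^ (r-1)) s₀ := by
  set ε : ℝ := min s₀ (1 - s₀) / 2 with hε
  have hεpos : 0 < ε := by
    have : 0 < min s₀ (1 - s₀) := lt_min hs0 (by linarith)
    positivity
  have hε1 : ε ≤ s₀ / 2 := by
    have := min_le_left s₀ (1 - s₀); rw [hε]; linarith
  have hε2 : ε ≤ (1 - s₀) / 2 := by
    have := min_le_right s₀ (1 - s₀); rw [hε]; linarith
  have hball : ∀ x ∈ Metric.ball s₀ ε, 0 ≤ x ∧ x ≤ 1 ∧ (1 - s₀)/2 ≤ 1 - x := by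
    intro x hx
    rw [Metric.mem_ball, Real.dist_eq, abs_lt] at hx
    exact ⟨by linarith [hx.1], by linarith [hx.2], by linarith [hx.2]⟩
  set m : ℝ := (1 - s₀)/8 with hm
  have hmpos : 0 < m := by rw [hm]; linarith
  have hmeas : ∀ (c p q x : ℝ), 0 ≤ p →
      AEStronglyMeasurable (fun ξ => c * BB ξ ^ p * gg x ξ ^ q)
        (volume.restrict (Set.uIoc (0:ℝ) 1)) := by
    intro c p q x hp
    have hBc : Continuous BB := by unfold BB; continuity
    have hgc : Continuous (gg x) := by unfold gg; continuity
    have m2 : Measurable fun ξ => gg x ξ ^ q :=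
      (measurable_of_continuousOn_compl_singleton 0 (fun y hy =>
        (Real.continuousAt_rpow_const y q (Or.inl hy)).continuousWithinAt)).comp
        hgc.measurable
    exact ((measurable_const.mul
      (((Real.continuous_rpow_const hp).comp hBc).measurable)).mul m2).aestronglyMeasurable
  have hne1 : ∀ᵐ ξ : ℝ ∂volume, ξ ≠ 1 := by
    rw [MeasureTheory.ae_iff]
    simpa using measure_singleton (1:ℝ)
  have hae : ∀ᵐ ξ : ℝ ∂volume, ξ ∈ Set.uIoc (0:ℝ) 1 → ξ ∈ Set.Ioo (0:ℝ) 1 := by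
    filter_upwards [hne1] with ξ hξ hmem
    rw [Set.uIoc_of_le (by norm_num : (0:ℝ) ≤ 1)] at hmem
    exact ⟨hmem.1, lt_of_le_of_ne hmem.2 hξ⟩
  have hIoo : ∀ᵐ ξ ∂(volume.restrict (Set.uIoc (0:ℝ) 1)), ξ ∈ Set.Ioo (0:ℝ) 1 := by
    filter_upwards [ae_restrict_mem measurableSet_uIoc, ae_restrict_of_ae hne1]
      with ξ h₁ h₂
    rw [Set.uIoc_of_le (by norm_num : (0:ℝ) ≤ 1)] at h₁
    exact ⟨h₁.1, lt_of_le_of_ne h₁.2 h₂⟩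
  have hglow : ∀ x ∈ Metric.ball s₀ ε, ∀ ξ ∈ Set.Ioo (0:ℝ) 1, m * (1-ξ) ≤ gg x ξ := by
    intro x hx ξ hξ
    obtain ⟨hx0, hx1, hx2⟩ := hball x hx
    have h := g_lower hx0 hx1 hξ.1.le hξ.2.le
    have h1ξ : (0:ℝ) ≤ 1 - ξ := by linarith [hξ.2]
    nlinarith
  have hs₀ball : s₀ ∈ Metric.ball s₀ ε := Metric.mem_ball_self hεpos
  -- integrability of F s₀
  have hF_int : IntervalIntegrable (fun ξ => cst * BB ξ ^ (k:ℝ) * gg s₀ ξ ^ r)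
      volume 0 1 := by
    refine IntervalIntegrable.mono_fun' (integrable_bound (cst * m ^ r))
      (hmeas cst (k:ℝ) r s₀ (Nat.cast_nonneg k)) ?_
    filter_upwards [hIoo] with ξ hξ
    have hg0 : 0 < gg s₀ ξ :=
      lt_of_lt_of_le (mul_pos hmpos (by linarith [hξ.2])) (hglow s₀ hs₀ball ξ hξ)
    have hB0 : 0 ≤ BB ξ := B_nonneg hξ.2.le hξ.1.le
    have hnn : 0 ≤ cst * BB ξ ^ (k:ℝ) * gg s₀ ξ ^ r :=
      mul_nonneg (mul_nonneg hcst.le (Real.rpow_nonneg hB0 _)) (Real.rpow_nonneg hg0.le _)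
    rw [Real.norm_eq_abs, abs_of_nonneg hnn]
    have := point_bound hcst.le (Nat.cast_nonneg k) hr.le hmpos hξ hξ.1.le
      (hglow s₀ hs₀ball ξ hξ)
    rwa [hkr] at this
  -- bound for the derivative family
  have h_bound : ∀ᵐ ξ : ℝ ∂volume, ξ ∈ Set.uIoc (0:ℝ) 1 → ∀ x ∈ Metric.ball s₀ ε,
      ‖cst * -r * BB ξ ^ ((k:ℝ)+1) * gg x ξ ^ (r-1)‖ ≤
        (cst * -r * m ^ (r-1)) * (1-ξ) ^ (-(1/2) : ℝ) := by
    filter_upwards [hae] with ξ h hmem x hx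
    have hξ := h hmem
    have hg0 : 0 < gg x ξ :=
      lt_of_lt_of_le (mul_pos hmpos (by linarith [hξ.2])) (hglow x hx ξ hξ)
    have hB0 : 0 ≤ BB ξ := B_nonneg hξ.2.le hξ.1.le
    have hnn : 0 ≤ cst * -r * BB ξ ^ ((k:ℝ)+1) * gg x ξ ^ (r-1) :=
      mul_nonneg (mul_nonneg (mul_nonneg hcst.le (by linarith)) (Real.rpow_nonneg hB0 _))
        (Real.rpow_nonneg hg0.le _)
    rw [Real.norm_eq_abs, abs_of_nonneg hnn]
    have hpb := point_bound (mul_nonneg hcst.le (by linarith : (0:ℝ) ≤ -r))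
      (by positivity : (0:ℝ) ≤ (k:ℝ)+1) (by linarith : r - 1 ≤ 0) hmpos hξ hξ.1.le
      (hglow x hx ξ hξ)
    have he : ((k:ℝ)+1) + (r-1) = -(1/2) := by linarith
    rwa [he] at hpb
  -- differentiability of the family
  have h_diff : ∀ᵐ ξ : ℝ ∂volume, ξ ∈ Set.uIoc (0:ℝ) 1 → ∀ x ∈ Metric.ball s₀ ε,
      HasDerivAt (fun x => cst * BB ξ ^ (k:ℝ) * gg x ξ ^ r)
        (cst * -r * BB ξ ^ ((k:ℝ)+1) * gg x ξ ^ (r-1)) x := by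
    filter_upwards [hae] with ξ h hmem x hx
    have hξ := h hmem
    have hg0 : 0 < gg x ξ :=
      lt_of_lt_of_le (mul_pos hmpos (by linarith [hξ.2])) (hglow x hx ξ hξ)
    have hBne : BB ξ ≠ 0 := (B_pos hξ.1.le hξ.2).ne'
    have hgd : HasDerivAt (fun x => gg x ξ) (-BB ξ) x := by
      unfold gg BB
      simpa using (((hasDerivAt_id x).mul_const (1-ξ^4)).div_const 4).const_sub ((1-ξ^3)/3)
    have hd : HasDerivAt (fun x => cst * BB ξ ^ (k:ℝ) * gg x ξ ^ r)
        ((cst * BB ξ ^ (k:ℝ)) * (-BB ξ * r * gg x ξ ^ (r-1))) x :=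
      (hgd.rpow_const (Or.inl hg0.ne')).const_mul _
    convert hd using 1
    rw [Real.rpow_add_one hBne (k:ℝ)]
    ring
  exact intervalIntegral.hasDerivAt_integral_of_dominated_loc_of_deriv_le
    (F := fun s ξ => cst * BB ξ ^ (k:ℝ) * gg s ξ ^ r)
    (F' := fun x ξ => cst * -r * BB ξ ^ ((k:ℝ)+1) * gg x ξ ^ (r-1))
    (bound := fun ξ => (cst * -r * m ^ (r-1)) * (1-ξ) ^ (-(1/2) : ℝ)) (Metric.ball_mem_nhds s₀ hεpos)
    (Filter.Eventually.of_forall fun x => hmeas cst (k:ℝ) r x (Nat.cast_nonneg k))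
    hF_int (hmeas (cst * -r) ((k:ℝ)+1) (r-1) s₀ (by positivity)) h_bound
    (integrable_bound _) h_diff

lemma g_pos {s ξ : ℝ} (hs : s ∈ Set.Ioo (0:ℝ) 1) (hξ : ξ ∈ Set.Ioo (0:ℝ) 1) :
    0 < gg s ξ := by
  refine lt_of_lt_of_le ?_ (g_lower hs.1.le hs.2.le hξ.1.le hξ.2.le)
  have := hs.2; have := hξ.2
  nlinarith

noncomputable def F1 (s : ℝ) : ℝ :=
  ∫ ξ in (0:ℝ)..1, (1/2 : ℝ) * BB ξ ^ (((1:ℕ)):ℝ) * gg s ξ ^ ((-(1/2):ℝ)-1)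

noncomputable def F2 (s : ℝ) : ℝ :=
  ∫ ξ in (0:ℝ)..1, (1/2 : ℝ) * -((-(1/2):ℝ)-1) * BB ξ ^ ((((1:ℕ)):ℝ)+1) *
    gg s ξ ^ (((-(1/2):ℝ)-1)-1)

lemma Ihat_eq {s : ℝ} (hs0 : 0 ≤ s) (hs1 : s ≤ 1) :
    Ihat s = ∫ ξ in (0:ℝ)..1, 1 * BB ξ ^ (((0:ℕ)):ℝ) * gg s ξ ^ (-(1/2) : ℝ) := by
  unfold Ihat
  apply intervalIntegral.integral_congr
  intro ξ hξ
  rw [Set.uIcc_of_le (by norm_num : (0:ℝ) ≤ 1)] at hξ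
  have hg0 : 0 ≤ gg s ξ := by
    refine le_trans ?_ (g_lower hs0 hs1 hξ.1 hξ.2)
    have := hξ.2; nlinarith
  show 1 / Real.sqrt ((1 - ξ^3)/3 - s * (1 - ξ^4)/4) =
    1 * BB ξ ^ (((0:ℕ)):ℝ) * gg s ξ ^ (-(1/2) : ℝ)
  rw [Nat.cast_zero, Real.rpow_zero, mul_one, one_mul]
  rw [show ((1 - ξ^3)/3 - s * (1 - ξ^4)/4) = gg s ξ from rfl]
  rw [Real.sqrt_eq_rpow, one_div, ← Real.rpow_neg hg0]

lemma hasDerivAt_Ihat {s : ℝ} (hs : s ∈ Set.Ioo (0:ℝ) 1) :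
    HasDerivAt Ihat (F1 s) s := by
  obtain ⟨-, h⟩ := core 1 one_pos 0 (-(1/2)) (by norm_num) (by norm_num) hs.1 hs.2
  have heq : Ihat =ᶠ[nhds s]
      fun t => ∫ ξ in (0:ℝ)..1, 1 * BB ξ ^ (((0:ℕ)):ℝ) * gg t ξ ^ (-(1/2) : ℝ) :=
    Filter.eventuallyEq_of_mem (Ioo_mem_nhds hs.1 hs.2)
      (fun t ht => Ihat_eq ht.1.le ht.2.le)
  have h2 := h.congr_of_eventuallyEq heq
  refine HasDerivAt.congr_deriv h2 (Eq.symm ?_)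
  unfold F1
  apply intervalIntegral.integral_congr
  intro ξ _
  push_cast
  norm_num

lemma F1_integrand_eq (s : ℝ) :
    (fun ξ => (1/2 : ℝ) * BB ξ ^ (((1:ℕ)):ℝ) * gg s ξ ^ ((-(1/2):ℝ)-1)) =
      fun ξ => 1 * -(-(1/2):ℝ) * BB ξ ^ ((((0:ℕ)):ℝ)+1) * gg s ξ ^ ((-(1/2):ℝ)-1) := by
  funext ξ; push_cast; norm_num

lemma F1_pos {s : ℝ} (hs : s ∈ Set.Ioo (0:ℝ) 1) : 0 < F1 s := by
  obtain ⟨hint, -⟩ := core 1 one_pos 0 (-(1/2)) (by norm_num) (by norm_num) hs.1 hs.2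
  rw [← F1_integrand_eq s] at hint
  refine intervalIntegral.intervalIntegral_pos_of_pos_on hint (fun ξ hξ => ?_) one_pos
  have hB := B_pos hξ.1.le hξ.2
  have hg := g_pos hs hξ
  have h1 := Real.rpow_pos_of_pos hB (((1:ℕ)):ℝ)
  have h2 := Real.rpow_pos_of_pos hg ((-(1/2):ℝ)-1)
  positivity

lemma hasDerivAt_F1 {s : ℝ} (hs : s ∈ Set.Ioo (0:ℝ) 1) :
    HasDerivAt F1 (F2 s) s := by
  obtain ⟨-, h⟩ := core (1/2) (by norm_num) 1 (-(1/2)-1) (by norm_num)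
    (by push_cast; norm_num) hs.1 hs.2
  exact h

lemma F2_pos {s : ℝ} (hs : s ∈ Set.Ioo (0:ℝ) 1) : 0 < F2 s := by
  obtain ⟨hint, -⟩ := core (1/2) (by norm_num) 1 (-(1/2)-1) (by norm_num)
    (by push_cast; norm_num) hs.1 hs.2
  refine intervalIntegral.intervalIntegral_pos_of_pos_on hint (fun ξ hξ => ?_) one_pos
  have hB := B_pos hξ.1.le hξ.2
  have hg := g_pos hs hξ
  have h1 := Real.rpow_pos_of_pos hB ((((1:ℕ)):ℝ)+1)
  have h2 := Real.rpow_pos_of_pos hg (((-(1/2):ℝ)-1)-1)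
  positivity

lemma hasDerivAt_derivIhat {s : ℝ} (hs : s ∈ Set.Ioo (0:ℝ) 1) :
    HasDerivAt (deriv Ihat) (F2 s) s := by
  have heq : deriv Ihat =ᶠ[nhds s] F1 :=
    Filter.eventuallyEq_of_mem (Ioo_mem_nhds hs.1 hs.2)
      (fun t ht => (hasDerivAt_Ihat ht).deriv)
  exact (hasDerivAt_F1 hs).congr_of_eventuallyEq heq

lemma hasDerivAt_eta {s : ℝ} (hs : s ∈ Set.Ioo (0:ℝ) 1) :
    HasDerivAt eta (F1 s + 2 * s * F2 s) s := by
  have hI := hasDerivAt_Ihat hs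
  have hD := hasDerivAt_derivIhat hs
  have h1 : HasDerivAt (fun t : ℝ => 2 * t) 2 s := by
    simpa using (hasDerivAt_id s).const_mul 2
  have h2 := (h1.mul hD).sub hI
  have hd : deriv Ihat s = F1 s := hI.deriv
  refine HasDerivAt.congr_deriv h2 (Eq.symm ?_)
  rw [hd]; ring

theorem stmt_5 :
    (∀ s ∈ Set.Ioo (0:ℝ) 1, 0 < deriv eta s) ∧
      (∀ s ∈ Set.Ioo (0:ℝ) 1, ∀ t ∈ Set.Ioo (0:ℝ) 1,
        eta s = 0 → eta t = 0 → s = t) := by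
  have hpos : ∀ s ∈ Set.Ioo (0:ℝ) 1, 0 < deriv eta s := by
    intro s hs
    rw [(hasDerivAt_eta hs).deriv]
    have := F1_pos hs; have := F2_pos hs; have := hs.1
    positivity
  refine ⟨hpos, ?_⟩
  have hmono : StrictMonoOn eta (Set.Ioo (0:ℝ) 1) := by
    refine strictMonoOn_of_deriv_pos (convex_Ioo 0 1)
      (fun x hx => ((hasDerivAt_eta hx).continuousAt).continuousWithinAt) ?_
    intro x hx
    rw [interior_Ioo] at hx
    exact hpos x hx
  intro s hs t ht h1 h2
  rcases lt_trichotomy s t with h | h | h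
  · exact absurd (hmono hs ht h) (by rw [h1, h2]; exact lt_irrefl 0)
  · exact h
  · exact absurd (hmono ht hs h) (by rw [h1, h2]; exact lt_irrefl 0)
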